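/- Let G be the graph of order n = r + k obtained from K_r (3 ≤ r ≤ n - 1) with two distinguished vertices u, v and a path P = u₁u₂…u_k by adding the edges u u₁ and v u₁. Then α(G) > α(Ki_{n,r}). -/

import Mathlib

open SimpleGraph Matrix BigOperators

/-- The algebraic connectivity of a graph on a finite vertex set: the second-smallest
Laplacian eigenvalue, characterized as the infimum of Rayleigh quotients of the
Laplacian over nonzero vectors orthogonal to the all-ones vector. -/
noncomputable def algConn {V : Type*} [Fintype V] (G : SimpleGraph V) : ℝ :=
  letI := Classical.decEq V
  letI := Classical.decRel G.Adj
  sInf { a : ℝ | ∃ x : V → ℝ, x ≠ 0 ∧ ∑ v, x v = 0 ∧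
    a = (x ⬝ᵥ (G.lapMatrix ℝ).mulVec x) / (x ⬝ᵥ x) }

/-- `pathsGraph r k l` : the complete graph `K_r` (on `Fin r`), with a pendant path
`u u₁ … u_k` attached at the clique vertex `u = r-1` (path vertices `Sum.inr (Sum.inl i)`)
and a pendant path `v v₁ … v_l` attached at the clique vertex `v = r-2`
(path vertices `Sum.inr (Sum.inr i)`). -/
def pathsGraph (r k l : ℕ) : SimpleGraph (Fin r ⊕ (Fin k ⊕ Fin l)) :=
  SimpleGraph.fromRel (fun x y =>
    match x, y with
    | .inl _, .inl _ => True
    | .inl a, .inr (.inl i) => a.val = r - 1 ∧ i.val = 0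
    | .inl a, .inr (.inr i) => a.val = r - 2 ∧ i.val = 0
    | .inr (.inl i), .inr (.inl j) => i.val + 1 = j.val
    | .inr (.inr i), .inr (.inr j) => i.val + 1 = j.val
    | _, _ => False)

/-- The kite graph `Ki_{n,r}` : the complete graph `K_r` with a pendant path of length
`n - r` attached at the clique vertex `r-1`. -/
def kiteGraph (n r : ℕ) : SimpleGraph (Fin r ⊕ Fin (n - r)) :=
  SimpleGraph.fromRel (fun x y =>
    match x, y with
    | .inl _, .inl _ => True
    | .inl a, .inr i => a.val = r - 1 ∧ i.val = 0
    | .inr i, .inr j => i.val + 1 = j.val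
    | _, _ => False)

noncomputable instance (r k l : ℕ) : DecidableRel (pathsGraph r k l).Adj :=
  Classical.decRel _

noncomputable instance (n r : ℕ) : DecidableRel (kiteGraph n r).Adj :=
  Classical.decRel _

/-- `cliquePlusPath2 r k` : the complete graph `K_r` on `Fin r` (with distinguished
vertices `u = r-1` and `v = r-2`) together with a path `u₁ u₂ … u_k` (the vertices
`Sum.inr i`), where the edges `u u₁` and `v u₁` are added. -/
def cliquePlusPath2 (r k : ℕ) : SimpleGraph (Fin r ⊕ Fin k) :=
  SimpleGraph.fromRel (fun x y =>
    match x, y with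
    | .inl _, .inl _ => True
    | .inl a, .inr i => (a.val = r - 1 ∨ a.val = r - 2) ∧ i.val = 0
    | .inr i, .inr j => i.val + 1 = j.val
    | _, _ => False)

noncomputable instance (r k : ℕ) : DecidableRel (cliquePlusPath2 r k).Adj :=
  Classical.decRel _

set_option linter.unusedSectionVars false

open Finset

noncomputable def RQset {V : Type*} [Fintype V] (G : SimpleGraph V) : Set ℝ :=
  letI := Classical.decEq V
  letI := Classical.decRel G.Adj
  { a : ℝ | ∃ x : V → ℝ, x ≠ 0 ∧ ∑ v, x v = 0 ∧
    a = (x ⬝ᵥ (G.lapMatrix ℝ).mulVec x) / (x ⬝ᵥ x) }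

lemma algConn_def {V : Type*} [Fintype V] (G : SimpleGraph V) :
    algConn G = sInf (RQset G) := rfl

section Generic
variable {V : Type*} [Fintype V] [DecidableEq V] (G : SimpleGraph V) [DecidableRel G.Adj]

noncomputable def qf (x : V → ℝ) : ℝ := x ⬝ᵥ (G.lapMatrix ℝ).mulVec x

lemma qf_eq (x : V → ℝ) :
    qf G x = (∑ i, ∑ j, if G.Adj i j then (x i - x j)^2 else 0)/2 := by
  rw [qf, ← Matrix.toLinearMap₂'_apply', lapMatrix_toLinearMap₂']

lemma qf_nonneg (x : V → ℝ) : 0 ≤ qf G x := by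
  rw [qf_eq]; positivity

lemma mem_RQset {a : ℝ} :
    a ∈ RQset G ↔
    ∃ x : V → ℝ, x ≠ 0 ∧ ∑ v, x v = 0 ∧ a = qf G x / (x ⬝ᵥ x) := by
  have h : (letI := Classical.decEq V; letI := Classical.decRel G.Adj; G.lapMatrix ℝ)
      = G.lapMatrix ℝ := by congr!
  unfold RQset
  constructor
  · rintro ⟨x, h1, h2, h3⟩; exact ⟨x, h1, h2, by rw [h3, h, qf]⟩
  · rintro ⟨x, h1, h2, h3⟩; exact ⟨x, h1, h2, by rw [h3, h, qf]⟩

variable {G}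

lemma dp_self_pos {x : V → ℝ} (hx : x ≠ 0) : 0 < x ⬝ᵥ x := by
  rcases lt_or_eq_of_le (Finset.sum_nonneg fun i _ => mul_self_nonneg (x i)) with h | h
  · exact h
  · exact absurd (dotProduct_self_eq_zero.mp h.symm) hx

lemma RQset_bddBelow : BddBelow (RQset G) := by
  refine ⟨0, fun a ha => ?_⟩
  rw [mem_RQset] at ha
  obtain ⟨x, hx, -, rfl⟩ := ha
  exact div_nonneg (qf_nonneg G x) (dp_self_pos hx).le

lemma RQ_mem {x : V → ℝ} (hx : x ≠ 0) (hs : ∑ v, x v = 0) :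
    qf G x / (x ⬝ᵥ x) ∈ RQset G :=
  (mem_RQset G).mpr ⟨x, hx, hs, rfl⟩

lemma algConn_le {x : V → ℝ} (hx : x ≠ 0) (hs : ∑ v, x v = 0) :
    algConn G ≤ qf G x / (x ⬝ᵥ x) := by
  rw [algConn_def]
  exact csInf_le RQset_bddBelow (RQ_mem hx hs)

/-- normalization -/
lemma exists_normalized {y : V → ℝ} (hy : y ≠ 0) (hs : ∑ v, y v = 0) :
    ∃ z : V → ℝ, (z ⬝ᵥ z = 1 ∧ ∑ v, z v = 0) ∧ qf G z = qf G y / (y ⬝ᵥ y) := by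
  have hpos := dp_self_pos hy
  set c : ℝ := (Real.sqrt (y ⬝ᵥ y))⁻¹ with hc
  have hcsq : c^2 = (y ⬝ᵥ y)⁻¹ := by
    rw [hc, ← Real.sqrt_inv]
    exact Real.sq_sqrt (by positivity)
  refine ⟨c • y, ⟨?_, ?_⟩, ?_⟩
  · rw [smul_dotProduct, dotProduct_smul, smul_eq_mul, smul_eq_mul, ← mul_assoc,
      ← sq, hcsq]
    field_simp
  · simp only [Pi.smul_apply, smul_eq_mul, ← Finset.mul_sum, hs, mul_zero]
  · rw [qf, Matrix.mulVec_smul, smul_dotProduct, dotProduct_smul, smul_eq_mul,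
      smul_eq_mul, ← mul_assoc, ← sq, hcsq, div_eq_inv_mul, qf]

lemma qf_continuous : Continuous (qf G) := by
  unfold qf dotProduct Matrix.mulVec
  simp only [dotProduct]
  fun_prop

/-- minimizer exists -/
lemma exists_minimizer (hne : ∃ y : V → ℝ, y ≠ 0 ∧ ∑ v, y v = 0) :
    ∃ x : V → ℝ, x ⬝ᵥ x = 1 ∧ ∑ v, x v = 0 ∧ qf G x = algConn G := by
  classical
  set K : Set (V → ℝ) := {x | x ⬝ᵥ x = 1 ∧ ∑ v, x v = 0} with hK
  have hKne : K.Nonempty := by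
    obtain ⟨y, hy, hs⟩ := hne
    obtain ⟨z, hz, -⟩ := exists_normalized (G := G) hy hs
    exact ⟨z, hz⟩
  have hclosed : IsClosed K := by
    apply IsClosed.inter
    · exact isClosed_eq (by unfold dotProduct; fun_prop) continuous_const
    · exact isClosed_eq (by fun_prop) continuous_const
  have hbdd : Bornology.IsBounded K := by
    rw [Metric.isBounded_iff_subset_closedBall 0]
    refine ⟨1, fun x hx => ?_⟩
    simp only [Metric.mem_closedBall, dist_zero_right]
    rw [pi_norm_le_iff_of_nonneg zero_le_one]
    intro i
    rw [Real.norm_eq_abs, abs_le]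
    have h1 : x i * x i ≤ 1 := by
      rw [← hx.1]
      exact Finset.single_le_sum (f := fun j => x j * x j)
        (fun j _ => mul_self_nonneg _) (Finset.mem_univ i)
    constructor <;> nlinarith
  have hcpt : IsCompact K := Metric.isCompact_of_isClosed_isBounded hclosed hbdd
  obtain ⟨x, hxK, hmin⟩ := hcpt.exists_isMinOn hKne (qf_continuous (G := G)).continuousOn
  refine ⟨x, hxK.1, hxK.2, ?_⟩
  rw [algConn_def]
  symm
  apply IsLeast.csInf_eq
  constructor
  · have : qf G x = qf G x / (x ⬝ᵥ x) := by rw [hxK.1, div_one]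
    rw [this]
    refine RQ_mem (fun h => ?_) hxK.2
    have h1 := hxK.1
    rw [h] at h1
    simp at h1
  · intro a ha
    rw [mem_RQset] at ha
    obtain ⟨y, hy, hs, rfl⟩ := ha
    obtain ⟨z, hzK, hz⟩ := exists_normalized (G := G) hy hs
    rw [← hz]
    exact hmin hzK
end Generic
section Generic2
variable {V : Type*} [Fintype V] [DecidableEq V] {G : SimpleGraph V} [DecidableRel G.Adj]

lemma lap_symm (p q : V → ℝ) :
    p ⬝ᵥ (G.lapMatrix ℝ) *ᵥ q = q ⬝ᵥ (G.lapMatrix ℝ) *ᵥ p := by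
  rw [Matrix.dotProduct_mulVec, ← Matrix.mulVec_transpose, (isSymm_lapMatrix ℝ G).eq,
    dotProduct_comm]

lemma eigen_of_min {x : V → ℝ} (h1 : x ⬝ᵥ x = 1) (hs : ∑ v, x v = 0)
    (hq : qf G x = algConn G) :
    (G.lapMatrix ℝ) *ᵥ x = algConn G • x := by
  set L := G.lapMatrix ℝ with hL
  set m := algConn G with hm
  have hx0 : x ≠ 0 := fun h => by rw [h] at h1; simp at h1
  have key : ∀ d : V → ℝ, ∑ v, d v = 0 → x ⬝ᵥ L *ᵥ d = m * (x ⬝ᵥ d) := by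
    intro d hd
    rcases eq_or_ne d 0 with rfl | hd0
    · simp
    have hA : 0 ≤ qf G d - m * (d ⬝ᵥ d) := by
      have h := algConn_le (G := G) hd0 hd
      have hp := dp_self_pos hd0
      rw [le_div_iff₀ hp] at h
      linarith
    set A : ℝ := qf G d - m * (d ⬝ᵥ d) with hA'
    set B : ℝ := x ⬝ᵥ L *ᵥ d - m * (x ⬝ᵥ d) with hB'
    have hexp : ∀ t : ℝ, x + t • d ≠ 0 → 0 ≤ A * t^2 + 2*B*t := by
      intro t ht
      have hsum : ∑ v, (x + t • d) v = 0 := by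
        simp only [Pi.add_apply, Pi.smul_apply, smul_eq_mul, Finset.sum_add_distrib,
          ← Finset.mul_sum, hs, hd, mul_zero, add_zero]
      have hmem := algConn_le (G := G) ht hsum
      have hDpos := dp_self_pos ht
      rw [le_div_iff₀ hDpos] at hmem
      have hnum : qf G (x + t • d) =
          qf G x + 2*t*(x ⬝ᵥ L *ᵥ d) + t^2 * qf G d := by
        simp only [qf, ← hL, Matrix.mulVec_add, Matrix.mulVec_smul, add_dotProduct,
          smul_dotProduct, dotProduct_add, dotProduct_smul,
          smul_eq_mul]
        have := lap_symm (G := G) d x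
        rw [← hL] at this
        rw [this]
        ring
      have hden : (x + t • d) ⬝ᵥ (x + t • d) =
          1 + 2*t*(x ⬝ᵥ d) + t^2 * (d ⬝ᵥ d) := by
        simp only [add_dotProduct, dotProduct_add, smul_dotProduct,
          dotProduct_smul, smul_eq_mul, h1, dotProduct_comm d x]
        ring
      rw [hnum, hden, hq, ← hm] at hmem
      rw [hA', hB']
      nlinarith [hmem]
    have hA1 : (0:ℝ) < A + 1 := by linarith
    set t : ℝ := -2*B/(A+1) with ht'
    have hBzero : B = 0 := by
      by_cases hxt : x + t • d = 0
      · -- x = (-t) • d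
        have hx' : x = (-t) • d := by
          funext i
          have := congrFun hxt i
          simp only [Pi.add_apply, Pi.smul_apply, smul_eq_mul, Pi.zero_apply] at this ⊢
          linarith
        have ht0 : t ≠ 0 := by
          intro h
          rw [h] at hx'
          simp at hx'
          exact hx0 hx'
        have e1 : x ⬝ᵥ x = t^2 * (d ⬝ᵥ d) := by
          rw [hx', smul_dotProduct, dotProduct_smul, smul_eq_mul, smul_eq_mul]
          ring
        have e2 : qf G x = t^2 * qf G d := by
          rw [qf, ← hL, hx', Matrix.mulVec_smul, smul_dotProduct,
            dotProduct_smul, smul_eq_mul, smul_eq_mul, qf, ← hL]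
          ring
        have e3 : x ⬝ᵥ L *ᵥ d = -t * qf G d := by
          rw [hx', smul_dotProduct, smul_eq_mul, qf, ← hL]
          try ring
        have e4 : x ⬝ᵥ d = -t * (d ⬝ᵥ d) := by
          rw [hx', smul_dotProduct, smul_eq_mul]
          try ring
        have hAzero : A = 0 := by
          have h5 : t^2 * A = 0 := by
            have h6 : t^2 * (qf G d - m * (d ⬝ᵥ d)) = qf G x - m * (x ⬝ᵥ x) := by
              rw [e1, e2]; ring
            rw [hA', h6, hq, h1]; ring
          have ht2 : t^2 ≠ 0 := pow_ne_zero 2 ht0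
          exact (mul_eq_zero.mp h5).resolve_left ht2
        have hB : B = -t * A := by rw [hB', e3, e4, hA']; ring
        rw [hB, hAzero, mul_zero]
      · have h := hexp t hxt
        have hAt : (A+1) * t = -2*B := by
          rw [ht']
          field_simp
        have h4 : (A*t^2 + 2*B*t) * (A+1)^2 = A * ((A+1)*t)^2 + 2*B*((A+1)*t)*(A+1) := by
          ring
        rw [hAt] at h4
        have h5 : (A*t^2 + 2*B*t) * (A+1)^2 = -(4*B^2) := by rw [h4]; ring
        have h6 : (0:ℝ) ≤ -(4*B^2) := h5 ▸ mul_nonneg h (sq_nonneg (A+1))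
        nlinarith [sq_nonneg B]
    rw [hB'] at hBzero
    linarith
  -- extend to all directions
  have hcard : (0:ℝ) < Fintype.card V := by
    have : Nonempty V := by
      by_contra h
      rw [not_nonempty_iff] at h
      rw [dotProduct] at h1
      simp [Finset.univ_eq_empty] at h1
    exact_mod_cast Fintype.card_pos
  have key2 : ∀ d : V → ℝ, x ⬝ᵥ L *ᵥ d = m * (x ⬝ᵥ d) := by
    intro d
    set c : ℝ := (∑ v, d v) / (Fintype.card V) with hc
    set d0 : V → ℝ := d - Function.const V c with hd0'
    have hsum : ∑ v, d0 v = 0 := by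
      simp only [hd0', Pi.sub_apply, Function.const_apply, Finset.sum_sub_distrib,
        Finset.sum_const, Finset.card_univ, nsmul_eq_mul, hc]
      field_simp
      ring
    have h0 := key _ hsum
    have hconst : L *ᵥ (Function.const V c) = 0 := by
      have hc1 : (Function.const V c) = c • (fun _ : V => (1:ℝ)) := by
        funext; simp [Function.const]
      rw [hc1, Matrix.mulVec_smul, hL, lapMatrix_mulVec_const_eq_zero, smul_zero]
    have hd' : d = d0 + (Function.const V c) := by
      funext i; simp [hd0', Function.const]
    have hxc : x ⬝ᵥ (Function.const V c) = 0 := by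
      rw [dotProduct]
      simp only [Function.const_apply, ← Finset.sum_mul]
      rw [hs, zero_mul]
    conv_lhs => rw [hd']
    conv_rhs => rw [hd']
    rw [Matrix.mulVec_add, dotProduct_add, hconst, dotProduct_add,
      dotProduct_zero, add_zero, hxc, add_zero, h0]
  funext i
  have h := key2 (Pi.single i 1)
  rw [Matrix.mulVec_single, dotProduct_single] at h
  change x ⬝ᵥ (fun j => L j i * 1) = _ at h
  have hl : x ⬝ᵥ (fun j => L j i * 1) = (L *ᵥ x) i := by
    rw [dotProduct, Matrix.mulVec, dotProduct]
    apply Finset.sum_congr rfl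
    intro j _
    have hsym : L j i = L i j := by
      rw [hL]
      exact (isSymm_lapMatrix ℝ G).apply i j
    rw [hsym]; ring
  rw [hl] at h
  rw [h]
  simp

lemma lap_mulVec_apply' (x : V → ℝ) (i : V) :
    ((G.lapMatrix ℝ) *ᵥ x) i = ∑ j, if G.Adj i j then x i - x j else 0 := by
  rw [lapMatrix_mulVec_apply]
  have h1 : (G.degree i : ℝ) * x i = ∑ j, if G.Adj i j then x i else 0 := by
    rw [G.degree_eq_sum_if_adj i, Finset.sum_mul]
    apply Finset.sum_congr rfl
    intro j _
    split_ifs <;> ring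
  have h2 : ∑ u ∈ G.neighborFinset i, x u = ∑ j, if G.Adj i j then x j else 0 := by
    rw [← Finset.sum_filter]
    apply Finset.sum_congr _ (fun _ _ => rfl)
    ext j
    simp [SimpleGraph.mem_neighborFinset]
  rw [h1, h2, ← Finset.sum_sub_distrib]
  apply Finset.sum_congr rfl
  intro j _
  split_ifs <;> simp

end Generic2
section Transport
variable {V W : Type*} [Fintype V] [Fintype W] [DecidableEq V] [DecidableEq W]
variable {G : SimpleGraph V} {H : SimpleGraph W} [DecidableRel G.Adj] [DecidableRel H.Adj]

lemma RQset_subset_of_iso (e : V ≃ W) (h : ∀ a b, G.Adj a b ↔ H.Adj (e a) (e b)) :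
    RQset G ⊆ RQset H := by
  intro a ha
  rw [mem_RQset] at ha ⊢
  obtain ⟨x, hx, hsx, rfl⟩ := ha
  refine ⟨x ∘ e.symm, ?_, ?_, ?_⟩
  · intro h0
    apply hx
    funext v
    have h1 := congrFun h0 (e v)
    simpa using h1
  · show ∑ w, x (e.symm w) = 0
    rw [Equiv.sum_comp e.symm x, hsx]
  · have hden : (x ∘ e.symm) ⬝ᵥ (x ∘ e.symm) = x ⬝ᵥ x := by
      simp only [dotProduct, Function.comp]
      exact Equiv.sum_comp e.symm (fun v => x v * x v)
    have hnum : qf H (x ∘ e.symm) = qf G x := by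
      rw [qf_eq, qf_eq]
      congr 1
      rw [← Equiv.sum_comp e
        (fun w => ∑ j, if H.Adj w j then ((x ∘ e.symm) w - (x ∘ e.symm) j)^2 else 0)]
      refine Finset.sum_congr rfl fun v _ => ?_
      rw [← Equiv.sum_comp e
        (fun w => if H.Adj (e v) w then ((x ∘ e.symm) (e v) - (x ∘ e.symm) w)^2 else 0)]
      refine Finset.sum_congr rfl fun v' _ => ?_
      simp only [Function.comp, Equiv.symm_apply_apply]
      exact if_congr (h v v').symm rfl rfl
    rw [hden, hnum]

lemma algConn_eq_of_iso (e : V ≃ W) (h : ∀ a b, G.Adj a b ↔ H.Adj (e a) (e b)) :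
    algConn G = algConn H := by
  rw [algConn_def, algConn_def]
  congr 1
  apply subset_antisymm (RQset_subset_of_iso e h)
  apply RQset_subset_of_iso e.symm
  intro a b
  rw [h (e.symm a) (e.symm b)]
  simp

end Transport

/-- kite graph with path-length index `k` instead of `n - r`. -/
def kite' (r k : ℕ) : SimpleGraph (Fin r ⊕ Fin k) :=
  SimpleGraph.fromRel (fun x y =>
    match x, y with
    | .inl _, .inl _ => True
    | .inl a, .inr i => a.val = r - 1 ∧ i.val = 0
    | .inr i, .inr j => i.val + 1 = j.val
    | _, _ => False)

noncomputable instance (r k : ℕ) : DecidableRel (kite' r k).Adj :=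
  Classical.decRel _

lemma kiteGraph_algConn_eq (r k : ℕ) :
    algConn (kiteGraph (r + k) r) = algConn (kite' r k) := by
  have hcast : r + k - r = k := by omega
  apply algConn_eq_of_iso (Equiv.sumCongr (Equiv.refl (Fin r)) (finCongr hcast))
  rintro (a | i) (b | j) <;>
    simp [kiteGraph, kite', SimpleGraph.fromRel_adj, Fin.ext_iff]

section Adjacency
variable {r k : ℕ}

lemma kite'_adj_ll (a b : Fin r) :
    (kite' r k).Adj (.inl a) (.inl b) ↔ a ≠ b := by
  simp [kite', SimpleGraph.fromRel_adj]

lemma kite'_adj_lr (a : Fin r) (i : Fin k) :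
    (kite' r k).Adj (.inl a) (.inr i) ↔ a.val = r - 1 ∧ i.val = 0 := by
  simp [kite', SimpleGraph.fromRel_adj]

lemma kite'_adj_rl (i : Fin k) (a : Fin r) :
    (kite' r k).Adj (.inr i) (.inl a) ↔ a.val = r - 1 ∧ i.val = 0 := by
  rw [SimpleGraph.adj_comm]
  exact kite'_adj_lr a i

lemma kite'_adj_rr (i j : Fin k) :
    (kite' r k).Adj (.inr i) (.inr j) ↔ (i.val + 1 = j.val ∨ j.val + 1 = i.val) := by
  simp only [kite', SimpleGraph.fromRel_adj]
  constructor
  · rintro ⟨-, h⟩; exact h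
  · intro h
    refine ⟨?_, h⟩
    intro hij
    obtain rfl : i = j := by simpa using hij
    omega

lemma cpp_adj_ll (a b : Fin r) :
    (cliquePlusPath2 r k).Adj (.inl a) (.inl b) ↔ a ≠ b := by
  simp [cliquePlusPath2, SimpleGraph.fromRel_adj]

lemma cpp_adj_lr (a : Fin r) (i : Fin k) :
    (cliquePlusPath2 r k).Adj (.inl a) (.inr i) ↔
      (a.val = r - 1 ∨ a.val = r - 2) ∧ i.val = 0 := by
  simp [cliquePlusPath2, SimpleGraph.fromRel_adj]

lemma cpp_adj_rr (i j : Fin k) :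
    (cliquePlusPath2 r k).Adj (.inr i) (.inr j) ↔ (i.val + 1 = j.val ∨ j.val + 1 = i.val) := by
  simp only [cliquePlusPath2, SimpleGraph.fromRel_adj]
  constructor
  · rintro ⟨-, h⟩; exact h
  · intro h
    refine ⟨?_, h⟩
    intro hij
    obtain rfl : i = j := by simpa using hij
    omega

lemma adj_decomp (hr : 3 ≤ r) (hk : 1 ≤ k) (p q : Fin r ⊕ Fin k) :
    (cliquePlusPath2 r k).Adj p q ↔
      ((kite' r k).Adj p q ∨
        (p = .inl ⟨r-2, by omega⟩ ∧ q = .inr ⟨0, by omega⟩) ∨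
        (p = .inr ⟨0, by omega⟩ ∧ q = .inl ⟨r-2, by omega⟩)) := by
  rcases p with a | i <;> rcases q with b | j
  · simp [cpp_adj_ll, kite'_adj_ll]
  · rw [cpp_adj_lr, kite'_adj_lr]
    simp only [Sum.inl.injEq, Sum.inr.injEq, Fin.ext_iff, reduceCtorEq, false_and, and_false,
      or_false, false_or]
    omega
  · rw [SimpleGraph.adj_comm, cpp_adj_lr, kite'_adj_rl]
    simp only [Sum.inl.injEq, Sum.inr.injEq, Fin.ext_iff, reduceCtorEq, false_and, and_false,
      or_false, false_or]
    omega
  · rw [cpp_adj_rr, kite'_adj_rr]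
    simp

end Adjacency
section Helpers

lemma sum_ite_eq_of_iff {m : ℕ} (f : Fin m → ℝ) (c : Fin m) (P : Fin m → Prop)
    [DecidablePred P] (h : ∀ j, P j ↔ j = c) :
    (∑ j, if P j then f j else 0) = f c := by
  rw [Finset.sum_congr rfl (fun j _ => if_congr (h j) rfl rfl)]
  simp

lemma sum_ite_false' {m : ℕ} (f : Fin m → ℝ) (P : Fin m → Prop)
    [DecidablePred P] (h : ∀ j, ¬ P j) :
    (∑ j, if P j then f j else 0) = 0 := by
  rw [Finset.sum_congr rfl (fun j _ => if_neg (h j))]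
  simp

lemma sum_ite_ne {m : ℕ} (f : Fin m → ℝ) (c : Fin m) :
    ∑ b, (if c ≠ b then f b else 0) = (∑ b, f b) - f c := by
  have h : ∀ b, (if c ≠ b then f b else 0) = f b - (if b = c then f b else 0) := by
    intro b
    by_cases hb : b = c
    · subst hb; simp
    · simp [hb, Ne.symm hb]
  rw [Finset.sum_congr rfl (fun b _ => h b), Finset.sum_sub_distrib]
  simp

lemma pair_sum {α : Type*} [Fintype α] [DecidableEq α] (c d : α) (F : α → α → ℝ) :
    (∑ i, ∑ j, if (i = c ∧ j = d) then F i j else 0) = F c d := by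
  have h : ∀ i, (∑ j, if (i = c ∧ j = d) then F i j else 0) = if i = c then F i d else 0 := by
    intro i
    by_cases hi : i = c
    · simp [hi]
    · simp [hi]
  rw [Finset.sum_congr rfl (fun i _ => h i)]
  simp

end Helpers

section Concrete
variable {r k : ℕ}

lemma qf_cpp (hr : 3 ≤ r) (hk : 1 ≤ k) (x : Fin r ⊕ Fin k → ℝ) :
    qf (cliquePlusPath2 r k) x =
      qf (kite' r k) x + (x (.inl ⟨r-2, by omega⟩) - x (.inr ⟨0, by omega⟩))^2 := by
  set vL : Fin r ⊕ Fin k := .inl ⟨r-2, by omega⟩ with hvL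
  set p0 : Fin r ⊕ Fin k := .inr ⟨0, by omega⟩ with hp0
  have hvp : vL ≠ p0 := by simp [hvL, hp0]
  have hnadj : ¬ (kite' r k).Adj vL p0 := by
    rw [hvL, hp0, kite'_adj_lr]
    simp
    omega
  have hnadj' : ¬ (kite' r k).Adj p0 vL := fun h => hnadj h.symm
  have hpt : ∀ i j : Fin r ⊕ Fin k,
      (if (cliquePlusPath2 r k).Adj i j then (x i - x j)^2 else 0)
      = (if (kite' r k).Adj i j then (x i - x j)^2 else 0)
        + ((if (i = vL ∧ j = p0) then (x i - x j)^2 else 0)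
        + (if (i = p0 ∧ j = vL) then (x i - x j)^2 else 0)) := by
    intro i j
    have hd := adj_decomp hr hk i j
    rw [← hvL, ← hp0] at hd
    by_cases h1 : (kite' r k).Adj i j
    · have hG : (cliquePlusPath2 r k).Adj i j := hd.mpr (Or.inl h1)
      have h2 : ¬(i = vL ∧ j = p0) := by rintro ⟨rfl, rfl⟩; exact hnadj h1
      have h3 : ¬(i = p0 ∧ j = vL) := by rintro ⟨rfl, rfl⟩; exact hnadj' h1
      simp [hG, h1, h2, h3]
    · by_cases h2 : i = vL ∧ j = p0
      · have hG : (cliquePlusPath2 r k).Adj i j := hd.mpr (Or.inr (Or.inl h2))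
        have h3 : ¬(i = p0 ∧ j = vL) := by
          rintro ⟨rfl, rfl⟩; exact hvp h2.1.symm
        obtain ⟨rfl, rfl⟩ := h2
        simp [hG, h1, h3]
      · by_cases h3 : i = p0 ∧ j = vL
        · have hG : (cliquePlusPath2 r k).Adj i j := hd.mpr (Or.inr (Or.inr h3))
          obtain ⟨rfl, rfl⟩ := h3
          simp [hG, h1, h2]
        · have hG : ¬ (cliquePlusPath2 r k).Adj i j := by
            rw [hd]; tauto
          simp [hG, h1, h2, h3]
  rw [qf_eq, qf_eq]
  rw [Finset.sum_congr rfl (fun i _ => Finset.sum_congr rfl (fun j _ => hpt i j))]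
  simp only [Finset.sum_add_distrib]
  rw [pair_sum vL p0 (fun i j => (x i - x j)^2), pair_sum p0 vL (fun i j => (x i - x j)^2)]
  have : (x p0 - x vL)^2 = (x vL - x p0)^2 := by ring
  rw [this]
  ring

lemma RS_inl (hr : 3 ≤ r) (hk : 1 ≤ k) (f : Fin r ⊕ Fin k → ℝ) (a : Fin r) :
    ∑ j, (if (kite' r k).Adj (.inl a) j then f j else 0)
      = ((∑ b, f (.inl b)) - f (.inl a))
        + (if a.val = r - 1 then f (.inr ⟨0, by omega⟩) else 0) := by
  rw [Fintype.sum_sum_type]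
  congr 1
  · rw [Finset.sum_congr rfl (fun b _ => if_congr (kite'_adj_ll a b) rfl rfl)]
    exact sum_ite_ne _ a
  · by_cases ha : a.val = r - 1
    · rw [if_pos ha]
      apply sum_ite_eq_of_iff
      intro i
      rw [kite'_adj_lr, Fin.ext_iff]
      simp [ha]
    · rw [if_neg ha]
      apply sum_ite_false'
      intro i
      rw [kite'_adj_lr]
      tauto

lemma RS_inr (hr : 3 ≤ r) (hk : 1 ≤ k) (f : Fin r ⊕ Fin k → ℝ) (i : Fin k) :
    ∑ j, (if (kite' r k).Adj (.inr i) j then f j else 0)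
      = (if i.val = 0 then f (.inl ⟨r-1, by omega⟩) else 0)
        + ((if h : i.val + 1 < k then f (.inr ⟨i.val+1, h⟩) else 0)
          + (if h : 0 < i.val then f (.inr ⟨i.val-1, by omega⟩) else 0)) := by
  rw [Fintype.sum_sum_type]
  congr 1
  · by_cases hi : i.val = 0
    · rw [if_pos hi]
      apply sum_ite_eq_of_iff
      intro a
      rw [kite'_adj_rl, Fin.ext_iff]
      simp [hi]
    · rw [if_neg hi]
      apply sum_ite_false'
      intro a
      rw [kite'_adj_rl]
      tauto
  · have hsplit : ∀ j : Fin k,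
        (if (kite' r k).Adj (.inr i) (.inr j) then f (.inr j) else 0)
        = (if i.val + 1 = j.val then f (.inr j) else 0)
          + (if j.val + 1 = i.val then f (.inr j) else 0) := by
      intro j
      rw [if_congr (kite'_adj_rr i j) rfl rfl]
      by_cases h1 : i.val + 1 = j.val <;> by_cases h2 : j.val + 1 = i.val
      · omega
      all_goals simp [h1, h2]
    rw [Finset.sum_congr rfl (fun j _ => hsplit j), Finset.sum_add_distrib]
    congr 1
    · by_cases h : i.val + 1 < k
      · rw [dif_pos h]
        apply sum_ite_eq_of_iff
        intro j
        rw [Fin.ext_iff]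
        simp only []
        omega
      · rw [dif_neg h]
        apply sum_ite_false'
        intro j
        have := j.isLt
        omega
    · by_cases h : 0 < i.val
      · rw [dif_pos h]
        apply sum_ite_eq_of_iff
        intro j
        rw [Fin.ext_iff]
        simp only []
        omega
      · rw [dif_neg h]
        apply sum_ite_false'
        intro j
        omega

end Concrete
section TestBound
variable {r k : ℕ}

lemma algConn_kite'_le (hr : 3 ≤ r) (hk : 1 ≤ k) :
    algConn (kite' r k) ≤ ((r:ℝ)+2)/2 := by
  classical
  set z : Fin r ⊕ Fin k → ℝ :=
    Sum.elim (fun b : Fin r => if b.val = r-2 then 1 else 0)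
             (fun i : Fin k => if i.val = 0 then -1 else 0) with hz
  have Z1 : ∀ b : Fin r, z (.inl b) = if b.val = r - 2 then 1 else 0 := fun _ => rfl
  have Z2 : ∀ i : Fin k, z (.inr i) = if i.val = 0 then -1 else 0 := fun _ => rfl
  have hz0 : z ≠ 0 := by
    intro h
    have h1 := congrFun h (.inl ⟨r-2, by omega⟩)
    rw [Z1] at h1
    simp at h1
  have hsum : ∑ p, z p = 0 := by
    rw [Fintype.sum_sum_type]
    have e1 : ∑ b : Fin r, z (.inl b) = 1 := by
      rw [Finset.sum_congr rfl (fun b _ => Z1 b)]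
      rw [sum_ite_eq_of_iff (fun _ => (1:ℝ)) ⟨r-2, by omega⟩ _ (fun j => by rw [Fin.ext_iff])]
    have e2 : ∑ i : Fin k, z (.inr i) = -1 := by
      rw [Finset.sum_congr rfl (fun i _ => Z2 i)]
      rw [sum_ite_eq_of_iff (fun _ => (-1:ℝ)) ⟨0, by omega⟩ _ (fun j => by rw [Fin.ext_iff])]
    rw [e1, e2]; ring
  have hzz : z ⬝ᵥ z = 2 := by
    rw [dotProduct, Fintype.sum_sum_type]
    have e1 : ∑ b : Fin r, z (.inl b) * z (.inl b) = 1 := by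
      have hpt : ∀ b : Fin r, z (.inl b) * z (.inl b) = if b.val = r-2 then 1 else 0 := by
        intro b; rw [Z1]; split_ifs <;> norm_num
      rw [Finset.sum_congr rfl (fun b _ => hpt b)]
      rw [sum_ite_eq_of_iff (fun _ => (1:ℝ)) ⟨r-2, by omega⟩ _ (fun j => by rw [Fin.ext_iff])]
    have e2 : ∑ i : Fin k, z (.inr i) * z (.inr i) = 1 := by
      have hpt : ∀ i : Fin k, z (.inr i) * z (.inr i) = if i.val = 0 then 1 else 0 := by
        intro i; rw [Z2]; split_ifs <;> norm_num
      rw [Finset.sum_congr rfl (fun i _ => hpt i)]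
      rw [sum_ite_eq_of_iff (fun _ => (1:ℝ)) ⟨0, by omega⟩ _ (fun j => by rw [Fin.ext_iff])]
    rw [e1, e2]; norm_num
  have hqf : qf (kite' r k) z ≤ (r:ℝ) + 2 := by
    rw [qf_eq, Fintype.sum_sum_type]
    rw [Finset.sum_congr rfl
      (fun a _ => RS_inl hr hk (fun q => (z (.inl a) - z q)^2) a)]
    rw [Finset.sum_congr rfl
      (fun i _ => RS_inr hr hk (fun q => (z (.inr i) - z q)^2) i)]
    simp only [Finset.sum_add_distrib, Finset.sum_sub_distrib]
    have T2 : ∑ a : Fin r, (z (.inl a) - z (.inl a))^2 = 0 := by simp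
    have T1 : ∑ a : Fin r, ∑ b : Fin r, (z (.inl a) - z (.inl b))^2 ≤ 2*(r:ℝ) := by
      have hbd : ∀ a b : Fin r, (z (.inl a) - z (.inl b))^2
          ≤ (if a.val = r-2 then 1 else 0) + (if b.val = r-2 then 1 else 0) := by
        intro a b
        rw [Z1, Z1]
        split_ifs <;> norm_num
      calc ∑ a : Fin r, ∑ b : Fin r, (z (.inl a) - z (.inl b))^2
          ≤ ∑ a : Fin r, ∑ b : Fin r,
              ((if a.val = r-2 then (1:ℝ) else 0) + (if b.val = r-2 then 1 else 0)) := by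
            apply Finset.sum_le_sum
            intro a _
            apply Finset.sum_le_sum
            intro b _
            exact hbd a b
        _ = 2*(r:ℝ) := by
            have inner : ∀ a : Fin r,
                ∑ b : Fin r, ((if a.val = r-2 then (1:ℝ) else 0)
                  + (if b.val = r-2 then 1 else 0))
                = (r:ℝ) * (if a.val = r-2 then (1:ℝ) else 0) + 1 := by
              intro a
              rw [Finset.sum_add_distrib, Finset.sum_const, Finset.card_univ,
                Fintype.card_fin, nsmul_eq_mul,
                sum_ite_eq_of_iff (fun _ : Fin r => (1:ℝ)) ⟨r-2, by omega⟩ _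
                  (fun j => by rw [Fin.ext_iff])]
            rw [Finset.sum_congr rfl (fun a _ => inner a), Finset.sum_add_distrib,
              ← Finset.mul_sum,
              sum_ite_eq_of_iff (fun _ : Fin r => (1:ℝ)) ⟨r-2, by omega⟩ _
                (fun j => by rw [Fin.ext_iff]),
              Finset.sum_const, Finset.card_univ, Fintype.card_fin, nsmul_eq_mul]
            ring
    have T3 : ∑ a : Fin r,
        (if a.val = r-1 then (z (.inl a) - z (.inr ⟨0, by omega⟩))^2 else 0) = 1 := by
      rw [sum_ite_eq_of_iff (fun a => (z (.inl a) - z (.inr ⟨0, by omega⟩))^2)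
        ⟨r-1, by omega⟩ _ (fun j => by rw [Fin.ext_iff])]
      rw [Z1, Z2]
      have h1 : (⟨r-1, by omega⟩ : Fin r).val = r-1 := rfl
      have h2 : (⟨0, by omega⟩ : Fin k).val = 0 := rfl
      rw [h1, h2, if_neg (show ¬ r-1 = r-2 by omega), if_pos (show (0:ℕ) = 0 from rfl)]
      norm_num
    have U1 : ∑ i : Fin k,
        (if i.val = 0 then (z (.inr i) - z (.inl ⟨r-1, by omega⟩))^2 else 0) = 1 := by
      rw [sum_ite_eq_of_iff (fun i => (z (.inr i) - z (.inl ⟨r-1, by omega⟩))^2)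
        ⟨0, by omega⟩ _ (fun j => by rw [Fin.ext_iff])]
      rw [Z1, Z2]
      have h1 : (⟨r-1, by omega⟩ : Fin r).val = r-1 := rfl
      have h2 : (⟨0, by omega⟩ : Fin k).val = 0 := rfl
      rw [h1, h2, if_neg (show ¬ r-1 = r-2 by omega), if_pos (show (0:ℕ) = 0 from rfl)]
      norm_num
    have U2 : ∑ i : Fin k,
        (if h : i.val + 1 < k then (z (.inr i) - z (.inr ⟨i.val+1, h⟩))^2 else 0) ≤ 1 := by
      calc ∑ i : Fin k,
          (if h : i.val + 1 < k then (z (.inr i) - z (.inr ⟨i.val+1, h⟩))^2 else 0)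
          ≤ ∑ i : Fin k, (if i.val = 0 then (1:ℝ) else 0) := by
            apply Finset.sum_le_sum
            intro i _
            by_cases h : i.val + 1 < k
            · have hv : (⟨i.val+1, h⟩ : Fin k).val = i.val + 1 := rfl
              rw [dif_pos h, Z2, Z2, hv]
              by_cases h2 : i.val = 0
              · rw [if_pos h2, if_pos h2, if_neg (by omega)]
                norm_num
              · rw [if_neg h2, if_neg h2, if_neg (by omega)]
                norm_num
            · rw [dif_neg h]
              split_ifs <;> norm_num
        _ = 1 := sum_ite_eq_of_iff (fun _ => (1:ℝ)) ⟨0, by omega⟩ _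
            (fun j => by rw [Fin.ext_iff])
    have U3 : ∑ i : Fin k,
        (if h : 0 < i.val then (z (.inr i) - z (.inr ⟨i.val-1, by omega⟩))^2 else 0) ≤ 1 := by
      calc ∑ i : Fin k,
          (if h : 0 < i.val then (z (.inr i) - z (.inr ⟨i.val-1, by omega⟩))^2 else 0)
          ≤ ∑ i : Fin k, (if i.val = 1 then (1:ℝ) else 0) := by
            apply Finset.sum_le_sum
            intro i _
            by_cases h : 0 < i.val
            · have hv : (⟨i.val-1, by omega⟩ : Fin k).val = i.val - 1 := rfl
              rw [dif_pos h, Z2, Z2, hv]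
              by_cases h2 : i.val = 1
              · rw [if_neg (by omega : ¬ i.val = 0), if_pos (by omega : i.val - 1 = 0),
                  if_pos h2]
                norm_num
              · rw [if_neg (by omega : ¬ i.val = 0), if_neg (by omega : ¬ i.val - 1 = 0),
                  if_neg h2]
                norm_num
            · rw [dif_neg h]
              split_ifs <;> norm_num
        _ ≤ 1 := by
            by_cases hk2 : 1 < k
            · rw [sum_ite_eq_of_iff (fun _ => (1:ℝ)) ⟨1, hk2⟩ _
                (fun j => by rw [Fin.ext_iff])]
            · rw [sum_ite_false' (fun _ => (1:ℝ)) _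
                (fun j => by have := j.isLt; omega)]
              norm_num
    linarith [T1, T2, T3, U1, U2, U3]
  have h := algConn_le (G := kite' r k) hz0 hsum
  rw [hzz] at h
  calc algConn (kite' r k) ≤ qf (kite' r k) z / 2 := h
    _ ≤ ((r:ℝ)+2)/2 := by linarith [hqf]

end TestBound
theorem stmt12 {r k : ℕ} (hr : 3 ≤ r) (hk : 1 ≤ k) :
    algConn (kiteGraph (r + k) r) < algConn (cliquePlusPath2 r k) := by
  classical
  rw [kiteGraph_algConn_eq r k]
  by_contra hcon
  push_neg at hcon
  -- hcon : algConn (cliquePlusPath2 r k) ≤ algConn (kite' r k)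
  -- a nonzero test vector with zero sum
  set yw : Fin r ⊕ Fin k → ℝ :=
    fun p => if p = .inl ⟨0, by omega⟩ then 1 else if p = .inl ⟨1, by omega⟩ then -1 else 0
    with hyw
  have hyw0 : yw ≠ 0 := by
    intro h
    have h1 := congrFun h (.inl ⟨0, by omega⟩)
    simp [hyw] at h1
  have hyws : ∑ p, yw p = 0 := by
    rw [hyw, Fintype.sum_sum_type]
    have e2 : ∑ i : Fin k,
        (if (Sum.inr i : Fin r ⊕ Fin k) = .inl ⟨0, by omega⟩ then (1:ℝ)
          else if (Sum.inr i : Fin r ⊕ Fin k) = .inl ⟨1, by omega⟩ then -1 else 0) = 0 := by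
      apply Finset.sum_eq_zero
      intro i _
      rw [if_neg (by simp), if_neg (by simp)]
    have e1 : ∑ b : Fin r,
        (if (Sum.inl b : Fin r ⊕ Fin k) = .inl ⟨0, by omega⟩ then (1:ℝ)
          else if (Sum.inl b : Fin r ⊕ Fin k) = .inl ⟨1, by omega⟩ then -1 else 0) = 0 := by
      have hpt : ∀ b : Fin r,
          (if (Sum.inl b : Fin r ⊕ Fin k) = .inl ⟨0, by omega⟩ then (1:ℝ)
            else if (Sum.inl b : Fin r ⊕ Fin k) = .inl ⟨1, by omega⟩ then -1 else 0)
          = (if b = ⟨0, by omega⟩ then (1:ℝ) else 0) + (if b = ⟨1, by omega⟩ then -1 else 0) := by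
        intro b
        by_cases h0 : b = (⟨0, by omega⟩ : Fin r)
        · rw [if_pos (by rw [h0]), if_pos h0, if_neg (by rw [h0]; simp [Fin.ext_iff]), add_zero]
        · rw [if_neg (by simpa using h0), if_neg h0, zero_add]
          by_cases h1 : b = (⟨1, by omega⟩ : Fin r)
          · rw [if_pos (by rw [h1]), if_pos h1]
          · rw [if_neg (by simpa using h1), if_neg h1]
      rw [Finset.sum_congr rfl (fun b _ => hpt b), Finset.sum_add_distrib,
        Finset.sum_ite_eq' Finset.univ (⟨0, by omega⟩ : Fin r) (fun _ => (1:ℝ)),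
        Finset.sum_ite_eq' Finset.univ (⟨1, by omega⟩ : Fin r) (fun _ => (-1:ℝ))]
      simp
    rw [e1, e2]
    ring
  -- minimizer for the big graph
  obtain ⟨x, hx1, hxs, hxq⟩ :=
    exists_minimizer (G := cliquePlusPath2 r k) ⟨yw, hyw0, hyws⟩
  have hxne : x ≠ 0 := by
    intro h; rw [h] at hx1; simp at hx1
  have hΔeq := qf_cpp hr hk x
  have h1 : algConn (kite' r k) ≤ qf (kite' r k) x := by
    have h := algConn_le (G := kite' r k) hxne hxs
    rwa [hx1, div_one] at h
  have hsq : (x (.inl ⟨r-2, by omega⟩) - x (.inr ⟨0, by omega⟩))^2 = 0 := by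
    nlinarith [sq_nonneg (x (.inl ⟨r-2, by omega⟩) - x (.inr ⟨0, by omega⟩))]
  have hΔ : x (.inl ⟨r-2, by omega⟩) = x (.inr ⟨0, by omega⟩) := by
    have := pow_eq_zero_iff (n := 2) (by norm_num) |>.mp hsq
    linarith [sub_eq_zero.mp this]
  have hqK : qf (kite' r k) x = algConn (kite' r k) := by linarith
  have heig := eigen_of_min (G := kite' r k) hx1 hxs hqK
  set lam := algConn (kite' r k) with hlam
  have heq_at : ∀ p, (∑ j, if (kite' r k).Adj p j then x p - x j else 0) = lam * x p := by
    intro p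
    rw [← lap_mulVec_apply', heig]
    simp
  have hlam_le : lam ≤ ((r:ℝ)+2)/2 := algConn_kite'_le hr hk
  have hr3 : (3:ℝ) ≤ (r:ℝ) := by exact_mod_cast hr
  have hlam_lt : lam < (r:ℝ) := by linarith
  -- clique equations
  set S := ∑ b : Fin r, x (.inl b) with hS
  have hw : ∀ w : Fin r, w.val ≠ r - 1 → ((r:ℝ) - lam) * x (.inl w) = S := by
    intro w hwne
    have h := heq_at (.inl w)
    rw [RS_inl hr hk (fun q => x (.inl w) - x q) w, if_neg hwne] at h
    have hsumb : ∑ b : Fin r, (x (.inl w) - x (.inl b)) = (r:ℝ) * x (.inl w) - S := by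
      rw [Finset.sum_sub_distrib, Finset.sum_const, Finset.card_univ, Fintype.card_fin,
        nsmul_eq_mul, hS]
    rw [hsumb] at h
    linear_combination h
  have hccol : ∀ w : Fin r, w.val ≠ r - 1 → x (.inl w) = x (.inl ⟨r-2, by omega⟩) := by
    intro w hwne
    have ha1 := hw w hwne
    have ha2 := hw ⟨r-2, by omega⟩ (by simp; omega)
    have hne : ((r:ℝ) - lam) ≠ 0 := by intro h; linarith
    exact mul_left_cancel₀ hne (ha1.trans ha2.symm)
  have hSval : S = ((r:ℝ)-1) * x (.inl ⟨r-2, by omega⟩) + x (.inl ⟨r-1, by omega⟩) := by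
    rw [hS]
    have hpt : ∀ b : Fin r, x (.inl b)
        = (if b = ⟨r-1, by omega⟩ then x (.inl ⟨r-1, by omega⟩) - x (.inl ⟨r-2, by omega⟩) else 0)
          + x (.inl ⟨r-2, by omega⟩) := by
      intro b
      by_cases hb : b = (⟨r-1, by omega⟩ : Fin r)
      · rw [if_pos hb, hb]; ring
      · rw [if_neg hb]
        rw [hccol b (by simpa [Fin.ext_iff] using hb)]
        ring
    rw [Finset.sum_congr rfl (fun b _ => hpt b), Finset.sum_add_distrib,
      Finset.sum_ite_eq' Finset.univ (⟨r-1, by omega⟩ : Fin r)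
        (fun _ => x (.inl ⟨r-1, by omega⟩) - x (.inl ⟨r-2, by omega⟩)),
      Finset.sum_const, Finset.card_univ, Fintype.card_fin, nsmul_eq_mul]
    simp
    ring
  -- u equation
  have hueq : ((r:ℝ) * x (.inl ⟨r-1, by omega⟩) - S)
      + (x (.inl ⟨r-1, by omega⟩) - x (.inr ⟨0, by omega⟩))
      = lam * x (.inl ⟨r-1, by omega⟩) := by
    have h := heq_at (.inl ⟨r-1, by omega⟩)
    rw [RS_inl hr hk (fun q => x (.inl ⟨r-1, by omega⟩) - x q) ⟨r-1, by omega⟩,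
      if_pos (show (⟨r-1, by omega⟩ : Fin r).val = r - 1 from rfl)] at h
    have hsumb : ∑ b : Fin r, (x (.inl ⟨r-1, by omega⟩) - x (.inl b))
        = (r:ℝ) * x (.inl ⟨r-1, by omega⟩) - S := by
      rw [Finset.sum_sub_distrib, Finset.sum_const, Finset.card_univ, Fintype.card_fin,
        nsmul_eq_mul, hS]
    rw [hsumb] at h
    linear_combination h
  have haeqc : x (.inl ⟨r-1, by omega⟩) = x (.inl ⟨r-2, by omega⟩) := by
    have hne : ((r:ℝ) + 1 - lam) ≠ 0 := by intro h; linarith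
    apply mul_left_cancel₀ hne
    have hvc := hw ⟨r-2, by omega⟩ (by simp; omega)
    rw [← hΔ] at hueq
    linear_combination hueq - hvc
  have hlc : lam * x (.inl ⟨r-2, by omega⟩) = 0 := by
    have hvc := hw ⟨r-2, by omega⟩ (by simp; omega)
    rw [hSval, haeqc] at hvc
    linear_combination - hvc
  -- path propagation
  have hpath : ∀ m : ℕ, ∀ hm : m < k, x (.inr ⟨m, hm⟩) = x (.inl ⟨r-2, by omega⟩) := by
    intro m
    induction m using Nat.strong_induction_on with
    | _ m IH =>
      intro hm
      rcases Nat.eq_zero_or_pos m with rfl | hmpos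
      · exact hΔ.symm
      · have hm1 : m - 1 < k := by omega
        have h := heq_at (.inr ⟨m-1, hm1⟩)
        rw [RS_inr hr hk (fun q => x (.inr ⟨m-1, hm1⟩) - x q) ⟨m-1, hm1⟩] at h
        have hval : (⟨m-1, hm1⟩ : Fin k).val = m - 1 := rfl
        have h2 : (⟨m-1, hm1⟩ : Fin k).val + 1 < k := by rw [hval]; omega
        rw [dif_pos h2] at h
        have hmk : (⟨(⟨m-1, hm1⟩ : Fin k).val + 1, h2⟩ : Fin k) = ⟨m, hm⟩ := by
          simp only [Fin.mk.injEq, hval]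
          omega
        rw [hmk] at h
        have e0 : x (.inr ⟨m-1, hm1⟩) = x (.inl ⟨r-2, by omega⟩) :=
          IH (m-1) (by omega) hm1
        by_cases hm2 : m = 1
        · rw [if_pos (show (⟨m-1, hm1⟩ : Fin k).val = 0 from by rw [hval]; omega),
            dif_neg (show ¬ 0 < (⟨m-1, hm1⟩ : Fin k).val from by rw [hval]; omega)] at h
          rw [e0, haeqc] at h
          rw [hlc] at h
          linarith [h]
        · have hm3 : 0 < (⟨m-1, hm1⟩ : Fin k).val := by rw [hval]; omega
          rw [if_neg (show ¬ (⟨m-1, hm1⟩ : Fin k).val = 0 from by rw [hval]; omega),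
            dif_pos hm3] at h
          have hmk2 : (⟨(⟨m-1, hm1⟩ : Fin k).val - 1, by omega⟩ : Fin k)
              = ⟨m-2, by omega⟩ := by
            simp only [Fin.mk.injEq, hval]
            omega
          rw [hmk2] at h
          have e1 : x (.inr ⟨m-2, by omega⟩) = x (.inl ⟨r-2, by omega⟩) :=
            IH (m-2) (by omega) (by omega)
          rw [e0, e1] at h
          rw [hlc] at h
          linarith [h]
  -- x is constant
  have hxconst : ∀ p, x p = x (.inl ⟨r-2, by omega⟩) := by
    rintro (b | i)
    · by_cases hb : b.val = r - 1
      · have hbe : b = (⟨r-1, by omega⟩ : Fin r) := by simp [Fin.ext_iff, hb]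
        rw [hbe]
        exact haeqc
      · exact hccol b hb
    · exact hpath i.val i.isLt
  have hc0 : x (.inl ⟨r-2, by omega⟩) = 0 := by
    have hsx := hxs
    rw [Finset.sum_congr rfl (fun p _ => hxconst p), Finset.sum_const,
      Finset.card_univ] at hsx
    have hcard : (0:ℝ) < Fintype.card (Fin r ⊕ Fin k) := by
      have hcard' : 0 < Fintype.card (Fin r ⊕ Fin k) := by
        simp only [Fintype.card_sum, Fintype.card_fin]
        omega
      exact_mod_cast hcard'
    rw [nsmul_eq_mul] at hsx
    rcases mul_eq_zero.mp hsx with h | h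
    · exact absurd h (ne_of_gt hcard)
    · exact h
  have hx0 : x = 0 := funext fun p => by rw [hxconst p, hc0]; rfl
  rw [hx0] at hx1
  simp at hx1
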